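/- Let R be a commutative F_q-algebra and ξ = x_0 + x_1 τ + ⋯ + x_m τ^m an element of the twisted polynomial ring R{τ}. If for some n the coefficient x_n is a unit of R and all x_i with i > n are nilpotent, then the corresponding R-algebra map R[X] → R[X], X ↦ Σ x_i X^{q^i}, makes R[X] a free module of rank q^n over itself; in particular the induced map of schemes is finite and flat of degree q^n. -/

import Mathlib

open Polynomial


lemma aux_L1 {S : Type*} [CommRing S] {h' : S[X]} (hm : h'.Monic) (v : Sˣ) :
    ∀ (K : ℕ) (r : ℕ → S[X]), (∀ k, (r k).degree < h'.degree) →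
      (∑ k ∈ Finset.range K, r k * (C (v : S) * h') ^ k) = 0 → ∀ k < K, r k = 0 := by
  intro K
  induction K with
  | zero => intro r _ _ k hk; omega
  | succ K ih =>
    intro r hdeg hsum k hk
    rw [Finset.sum_range_succ'] at hsum
    have key : r 0 + h' * (C (v : S) * ∑ k ∈ Finset.range K, r (k + 1) * (C (v : S) * h') ^ k) = 0 := by
      rw [← hsum, Finset.mul_sum, Finset.mul_sum, add_comm]
      refine congrArg₂ (· + ·) ?_ ?_
      · refine Finset.sum_congr rfl fun j _ => ?_; ring
      · simp
    have huniq := Polynomial.div_modByMonic_unique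
      (f := (0 : S[X])) (g := h')
      (C (v : S) * ∑ k ∈ Finset.range K, r (k + 1) * (C (v : S) * h') ^ k) (r 0) hm
      ⟨by rw [key], hdeg 0⟩
    have h0 : r 0 = 0 := by rw [← huniq.2, Polynomial.zero_modByMonic]
    have hq : C (v : S) * ∑ k ∈ Finset.range K, r (k + 1) * (C (v : S) * h') ^ k = 0 := by
      rw [← huniq.1, Polynomial.zero_divByMonic]
    have hsum' : ∑ k ∈ Finset.range K, r (k + 1) * (C (v : S) * h') ^ k = 0 := by
      have h2 := congrArg (fun p => C ((v⁻¹ : Sˣ) : S) * p) hq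
      simpa [← mul_assoc, ← C_mul] using h2
    by_cases hk0 : k = 0
    · subst hk0; exact h0
    · obtain ⟨k', rfl⟩ : ∃ k', k = k' + 1 := ⟨k - 1, by omega⟩
      exact ih (fun k => r (k + 1)) (fun k => hdeg (k + 1)) hsum' k' (by omega)

lemma aux_expand {R : Type*} [CommRing R] (a : R) (s : ℕ) (p : R[X]) (D : ℕ)
    (hD : ∀ k, D ≤ k → p.coeff k = 0) :
    C a * X ^ s * p = ∑ k ∈ Finset.range D, C (a * p.coeff k) * X ^ (s + k) := by
  by_cases hp : p = 0
  · simp [hp]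
  · have hnd : p.natDegree < D := by
      by_contra h
      exact mt leadingCoeff_eq_zero.mp hp (hD _ (le_of_not_gt h))
    conv_lhs => rw [p.as_sum_range' D hnd]
    rw [Finset.mul_sum]
    refine Finset.sum_congr rfl fun k _ => ?_
    rw [← C_mul_X_pow_eq_monomial, C_mul, pow_add]
    ring


lemma aux_exists {R : Type*} [CommRing R] [Nontrivial R] {d : ℕ} (hd : 0 < d)
    {h' e f : R[X]} (hm : h'.Monic) (hdeg : h'.natDegree = d)
    (u : Rˣ) {N : Ideal R} {K : ℕ} (hNK : N ^ K = ⊥)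
    (he : ∀ s, e.coeff s ∈ N)
    (hfe : f = C (u : R) * h' + e) (g : R[X]) :
    ∃ c : Fin d → R[X], g = ∑ i, aeval f (c i) * X ^ (i : ℕ) := by
  classical
  set Rep : R[X] → Prop := fun g => ∃ c : Fin d → R[X], g = ∑ i, aeval f (c i) * X ^ (i : ℕ)
    with hRep
  have rep_zero : Rep 0 := ⟨0, by simp⟩
  have rep_add : ∀ {g₁ g₂}, Rep g₁ → Rep g₂ → Rep (g₁ + g₂) := by
    rintro g₁ g₂ ⟨c₁, rfl⟩ ⟨c₂, rfl⟩
    exact ⟨c₁ + c₂, by simp [add_mul, Finset.sum_add_distrib]⟩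
  have rep_neg : ∀ {g}, Rep g → Rep (-g) := by
    rintro g ⟨c, rfl⟩
    exact ⟨-c, by simp [Finset.sum_neg_distrib, neg_mul]⟩
  have rep_sum : ∀ (s : Finset ℕ) (F : ℕ → R[X]), (∀ k ∈ s, Rep (F k)) →
      Rep (∑ k ∈ s, F k) := by
    intro s F hF
    induction s using Finset.induction_on with
    | empty => simpa using rep_zero
    | @insert x s' hx ih =>
      rw [Finset.sum_insert hx]
      exact rep_add (hF x (Finset.mem_insert_self x s'))
        (ih fun k hk => hF k (Finset.mem_insert_of_mem hk))
  have rep_fmul : ∀ {g}, Rep g → Rep (f * g) := by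
    rintro g ⟨c, rfl⟩
    refine ⟨fun i => X * c i, ?_⟩
    rw [Finset.mul_sum]
    refine Finset.sum_congr rfl fun i _ => ?_
    rw [map_mul, aeval_X]; ring
  have rep_small : ∀ (a : R) (t : ℕ), t < d → Rep (C a * X ^ t) := by
    intro a t ht
    refine ⟨Pi.single ⟨t, ht⟩ (C a), ?_⟩
    rw [Finset.sum_eq_single (⟨t, ht⟩ : Fin d)]
    · simp [Pi.single_apply, algebraMap_eq]
    · intro i _ hne
      simp [Pi.single_apply, hne]
    · simp
  have main : ∀ j : ℕ, ∀ t : ℕ, ∀ a ∈ N ^ (K - j), Rep (C a * X ^ t) := by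
    intro j
    induction j with
    | zero =>
      intro t a ha
      rw [Nat.sub_zero, hNK, Ideal.mem_bot] at ha
      subst ha
      simpa using rep_zero
    | succ j ihj =>
      intro t
      induction t using Nat.strong_induction_on with
      | _ t iht =>
        intro a ha
        by_cases htd : t < d
        · exact rep_small a t htd
        · push_neg at htd
          have hXt : (X : R[X]) ^ t = X ^ (t - d) * X ^ d := by
            rw [← pow_add]; congr 1; omega
          have huu : (C ((u⁻¹ : Rˣ) : R) * C ((u : Rˣ) : R) : R[X]) = 1 := by
            rw [← C_mul, Units.inv_mul, C_1]
          have hid : C a * X ^ t =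
              (C a * X ^ (t - d)) * (X ^ d - h')
              + f * (C (((u⁻¹ : Rˣ) : R) * a) * X ^ (t - d))
              + -((C (((u⁻¹ : Rˣ) : R) * a) * X ^ (t - d)) * e) := by
            rw [hfe, hXt, C_mul]
            linear_combination (-(C a * X ^ (t - d) * h')) * huu
          rw [hid]
          have hcoeff : ∀ k, d ≤ k → ((X : R[X]) ^ d - h').coeff k = 0 := by
            intro k hk
            rcases eq_or_lt_of_le hk with heq | hlt
            · have h1 : h'.coeff k = 1 := by
                have h2 := hm.coeff_natDegree
                rwa [hdeg, heq] at h2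
              subst heq
              simp [coeff_X_pow, h1]
            · have h1 : h'.coeff k = 0 :=
                coeff_eq_zero_of_natDegree_lt (by omega)
              have h2 : ((X : R[X]) ^ d).coeff k = 0 := by
                rw [coeff_X_pow]; simp; omega
              simp [h1, h2]
          refine rep_add (rep_add ?_ ?_) (rep_neg ?_)
          · rw [aux_expand a (t - d) _ d hcoeff]
            refine rep_sum _ _ fun k hk => ?_
            rw [Finset.mem_range] at hk
            exact iht (t - d + k) (by omega) _ (Ideal.mul_mem_right _ _ ha)
          · refine rep_fmul (iht (t - d) (by omega) _ ?_)
            exact Ideal.mul_mem_left _ _ ha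
          · rw [aux_expand _ (t - d) e (e.natDegree + 1)
              (fun k hk => coeff_eq_zero_of_natDegree_lt (by omega))]
            refine rep_sum _ _ fun k hk => ?_
            refine ihj (t - d + k) _ ?_
            have hmem : a * e.coeff k ∈ N ^ (K - (j + 1)) * N :=
              Ideal.mul_mem_mul ha (he k)
            rw [← pow_succ] at hmem
            have hle : N ^ (K - (j + 1) + 1) ≤ N ^ (K - j) :=
              Ideal.pow_le_pow_right (by omega)
            rw [mul_assoc]
            exact Ideal.mul_mem_left _ _ (hle hmem)
  have hgrep : Rep g := by
    rw [g.as_sum_range]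
    refine rep_sum _ _ fun k _ => ?_
    rw [← C_mul_X_pow_eq_monomial]
    refine main K k _ ?_
    simp [Nat.sub_self]
  exact hgrep
lemma aux_unique {R : Type*} [CommRing R] [Nontrivial R] {d : ℕ} (hd : 0 < d)
    {h' e f : R[X]} (hm : h'.Monic) (hdeg : h'.natDegree = d)
    (u : Rˣ) {N : Ideal R} {K : ℕ} (hNK : N ^ K = ⊥)
    (he : ∀ s, e.coeff s ∈ N)
    (hfe : f = C (u : R) * h' + e)
    (c : Fin d → R[X]) (hc : ∑ i, aeval f (c i) * X ^ (i : ℕ) = 0) : c = 0 := by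
  classical
  set D := Finset.univ.sup (fun i : Fin d => (c i).natDegree) with hDdef
  have hD : ∀ i, (c i).natDegree < D + 1 :=
    fun i => Nat.lt_succ_of_le (hDdef ▸ Finset.le_sup (f := fun i : Fin d => (c i).natDegree) (Finset.mem_univ i))
  set r : ℕ → R[X] := fun k => ∑ i : Fin d, C ((c i).coeff k) * X ^ (i : ℕ) with hr
  have hsum : ∑ k ∈ Finset.range (D + 1), f ^ k * r k = 0 := by
    have expand : ∀ i : Fin d, aeval f (c i) * X ^ (i : ℕ)
        = ∑ k ∈ Finset.range (D + 1), C ((c i).coeff k) * f ^ k * X ^ (i : ℕ) := by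
      intro i
      rw [aeval_eq_sum_range' (hD i), Finset.sum_mul]
      exact Finset.sum_congr rfl fun k _ => by rw [smul_eq_C_mul]
    rw [← hc, Finset.sum_congr rfl (fun i _ => expand i), Finset.sum_comm]
    refine Finset.sum_congr rfl fun k _ => ?_
    rw [hr, Finset.mul_sum]
    exact Finset.sum_congr rfl fun i _ => by ring
  have hdh : h'.degree = (d : WithBot ℕ) := by
    rw [degree_eq_natDegree hm.ne_zero, hdeg]
  have hrdeg : ∀ k, (r k).degree < h'.degree := by
    intro k
    refine lt_of_le_of_lt (degree_sum_le _ _) ?_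
    rw [hdh]
    refine (Finset.sup_lt_iff (WithBot.bot_lt_coe d)).mpr fun i _ => ?_
    refine lt_of_le_of_lt (degree_C_mul_X_pow_le _ _) ?_
    exact WithBot.coe_lt_coe.mpr i.isLt
  have hrzero : ∀ k, D + 1 ≤ k → r k = 0 := by
    intro k hk
    rw [hr]
    refine Finset.sum_eq_zero fun i _ => ?_
    rw [coeff_eq_zero_of_natDegree_lt (by have := hD i; omega)]
    simp
  have claim : ∀ j : ℕ, ∀ k s : ℕ, (r k).coeff s ∈ N ^ j := by
    intro j
    induction j with
    | zero => intro k s; simp [Ideal.one_eq_top]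
    | succ j ihj =>
      have hNtop : N ≠ ⊤ := by
        intro hN
        rw [hN, Ideal.top_pow] at hNK
        have h0 : (1 : R) ∈ (⊥ : Ideal R) := hNK ▸ Submodule.mem_top
        rw [Ideal.mem_bot] at h0
        exact one_ne_zero h0
      have hItop : N ^ (j + 1) ≠ ⊤ := fun h =>
        hNtop (top_le_iff.mp (h ▸ Ideal.pow_le_self (Nat.succ_ne_zero j)))
      haveI := Ideal.Quotient.nontrivial_iff.mpr hItop
      set φ := Ideal.Quotient.mk (N ^ (j + 1)) with hφ
      have hmapmul : Ideal.map (C : R →+* R[X]) N * Ideal.map (C : R →+* R[X]) (N ^ j)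
          = Ideal.map (C : R →+* R[X]) (N ^ (j + 1)) := by
        rw [← Ideal.map_mul]
        congr 1
        rw [mul_comm, ← pow_succ]
      have hstep : ∀ k, (C (u : R) * h') ^ k * r k - f ^ k * r k
          ∈ Ideal.map (C : R →+* R[X]) (N ^ (j + 1)) := by
        intro k
        obtain ⟨w, hw⟩ := sub_dvd_pow_sub_pow (C (u : R) * h') f k
        have h1 : (C (u : R) * h') ^ k * r k - f ^ k * r k
            = ((C (u : R) * h' - f) * w) * r k := by rw [← hw]; ring
        have h2 : C (u : R) * h' - f = -e := by rw [hfe]; ring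
        rw [h1, h2, ← hmapmul]
        refine Ideal.mul_mem_mul (Ideal.mul_mem_right w _ (neg_mem ?_))
          (Ideal.mem_map_C_iff.mpr fun s => ihj k s)
        exact Ideal.mem_map_C_iff.mpr he
      have hsum2 : ∑ k ∈ Finset.range (D + 1), (C (u : R) * h') ^ k * r k
          ∈ Ideal.map (C : R →+* R[X]) (N ^ (j + 1)) := by
        have h4 : ∑ k ∈ Finset.range (D + 1), (C (u : R) * h') ^ k * r k
            = ∑ k ∈ Finset.range (D + 1), ((C (u : R) * h') ^ k * r k - f ^ k * r k) := by
          rw [Finset.sum_sub_distrib, hsum, sub_zero]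
        rw [h4]
        exact Submodule.sum_mem _ fun k _ => hstep k
      have hmap0 : ∑ k ∈ Finset.range (D + 1),
          (Polynomial.map φ (r k)) * (C (φ (u : R)) * Polynomial.map φ h') ^ k = 0 := by
        have h3 : Polynomial.map φ (∑ k ∈ Finset.range (D + 1), (C (u : R) * h') ^ k * r k)
            = 0 := by
          rw [Ideal.mem_map_C_iff] at hsum2
          ext s
          rw [coeff_map, coeff_zero, Ideal.Quotient.eq_zero_iff_mem]
          exact hsum2 s
        rw [Polynomial.map_sum] at h3
        rw [← h3]
        refine Finset.sum_congr rfl fun k _ => ?_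
        rw [Polynomial.map_mul, Polynomial.map_pow, Polynomial.map_mul, map_C]
        ring
      have hrk0 : ∀ k, k < D + 1 → Polynomial.map φ (r k) = 0 := by
        refine aux_L1 (hm.map φ) (Units.map (φ : R →+* R ⧸ N ^ (j + 1)).toMonoidHom u)
          (D + 1) (fun k => Polynomial.map φ (r k)) ?_ ?_
        · intro k
          refine lt_of_le_of_lt degree_map_le ?_
          have h5 : (Polynomial.map φ h').degree = h'.degree := by
            rw [degree_eq_natDegree (hm.map φ).ne_zero, degree_eq_natDegree hm.ne_zero,
              hm.natDegree_map]
          rw [h5]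
          exact hrdeg k
        · simpa [Units.coe_map] using hmap0
      intro k s
      by_cases hkD : k < D + 1
      · have h6 := hrk0 k hkD
        have h7 : φ ((r k).coeff s) = 0 := by
          rw [← coeff_map, h6, coeff_zero]
        exact Ideal.Quotient.eq_zero_iff_mem.mp h7
      · rw [hrzero k (by omega)]
        simp
  have hzero : ∀ k s : ℕ, (r k).coeff s = 0 := by
    intro k s
    have h8 := claim K k s
    rwa [hNK, Ideal.mem_bot] at h8
  have hcoeff : ∀ (i : Fin d) (k : ℕ), (c i).coeff k = (r k).coeff (i : ℕ) := by
    intro i k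
    rw [hr]
    rw [Polynomial.finset_sum_coeff, Finset.sum_eq_single i]
    · simp [coeff_C_mul, coeff_X_pow]
    · intro i' _ hne
      have : ¬((i : ℕ) = (i' : ℕ)) := fun h => hne (Fin.ext h.symm)
      simp [coeff_C_mul, coeff_X_pow, this]
    · simp
  funext i
  ext k
  rw [hcoeff i k, hzero k (i : ℕ)]
  simp
/-- If `ξ = Σ xᵢ τ^i ∈ R{τ}` has `xₙ` a unit and all `xᵢ`, `i > n`,
nilpotent, then the `R`-algebra endomorphism of `R[X]` sending `X` to the
additive polynomial `f = Σ xᵢ X^{qⁱ}` makes `R[X]` a free module of rank `qⁿ`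
over itself; in particular the induced map of schemes is finite flat of degree `qⁿ`.
Freeness of rank `qⁿ` over the image is expressed by a basis `b` with unique
representation of every `g ∈ R[X]` as `g = Σ (aeval f) (c i) * b i`. -/
theorem finite_flat_of_unit_leading_nilpotent_tail
    (Fq : Type*) [Field Fq] [Fintype Fq] (q : ℕ) (hq : q = Fintype.card Fq)
    (R : Type*) [CommRing R] [Algebra Fq R]
    (m n : ℕ) (x : ℕ → R) (hxn : IsUnit (x n))
    (hnil : ∀ i, n < i → IsNilpotent (x i))
    (f : R[X]) (hf : f = ∑ i ∈ Finset.range (m + 1), Polynomial.C (x i) * Polynomial.X ^ q ^ i)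
    (hnm : n ≤ m) :
    ∃ b : Fin (q ^ n) → R[X],
      ∀ g : R[X], ∃! c : Fin (q ^ n) → R[X],
        g = ∑ i : Fin (q ^ n), Polynomial.aeval f (c i) * b i := by
  classical
  rcases subsingleton_or_nontrivial R with hR | hR
  · refine ⟨fun _ => 1, fun g => ⟨0, Subsingleton.elim _ _, fun c _ => Subsingleton.elim _ _⟩⟩
  · have hq2 : 2 ≤ q := by rw [hq]; exact Fintype.one_lt_card
    set d := q ^ n with hdd
    have hd : 0 < d := pow_pos (by omega) n
    set u : Rˣ := hxn.unit with hu
    set h₀ : R[X] := ∑ i ∈ Finset.range (n + 1), C (x i) * X ^ q ^ i with hh0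
    set e : R[X] := ∑ i ∈ Finset.Ico (n + 1) (m + 1), C (x i) * X ^ q ^ i with he0
    have hsplit : f = h₀ + e := by
      rw [hf, Finset.range_eq_Ico,
        ← Finset.sum_Ico_consecutive _ (Nat.zero_le (n + 1)) (show n + 1 ≤ m + 1 by omega)]
      congr 1
      rw [hh0, Finset.range_eq_Ico]
    have hcoeffd : h₀.coeff d = x n := by
      rw [hh0, finset_sum_coeff, Finset.sum_eq_single n]
      · simp [coeff_C_mul, coeff_X_pow, hdd]
      · intro i _ hne
        have hne2 : ¬(d = q ^ i) := fun h => hne (Nat.pow_right_injective hq2 h.symm)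
        simp [coeff_C_mul, coeff_X_pow, hne2]
      · intro h
        exact absurd (Finset.self_mem_range_succ n) h
    have hndle : h₀.natDegree ≤ d := by
      rw [hh0]
      refine natDegree_sum_le_of_forall_le _ _ fun i hi => ?_
      refine le_trans (natDegree_C_mul_le _ _) ?_
      rw [natDegree_X_pow]
      exact Nat.pow_le_pow_right (by omega) (by rw [Finset.mem_range] at hi; omega)
    set h' : R[X] := C ((u⁻¹ : Rˣ) : R) * h₀ with hh'
    have hc1 : h'.coeff d = 1 := by
      rw [hh', coeff_C_mul, hcoeffd, ← hxn.unit_spec, ← hu, Units.inv_mul]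
    have hle' : h'.natDegree ≤ d := le_trans (natDegree_C_mul_le _ _) hndle
    have hm' : h'.Monic := monic_of_natDegree_le_of_coeff_eq_one d hle' hc1
    have hdeg : h'.natDegree = d :=
      le_antisymm hle' (le_natDegree_of_ne_zero (by rw [hc1]; exact one_ne_zero))
    have hfe : f = C (u : R) * h' + e := by
      rw [hsplit, hh']
      congr 1
      rw [← mul_assoc, ← C_mul, Units.mul_inv, C_1, one_mul]
    set N : Ideal R := Ideal.span (x '' Set.Ioo n (m + 1)) with hN
    have hNnil : ∃ K, N ^ K = ⊥ := by
      have hfg : N.FG := Submodule.fg_span ((Set.finite_Ioo n (m + 1)).image x)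
      have hle : N ≤ Ideal.radical ⊥ := by
        rw [hN, Ideal.span_le]
        rintro _ ⟨i, hi, rfl⟩
        obtain ⟨k, hk⟩ := hnil i hi.1
        exact Ideal.mem_radical_iff.mpr ⟨k, by rw [Ideal.mem_bot]; exact hk⟩
      obtain ⟨K, hK⟩ := Ideal.exists_pow_le_of_le_radical_of_fg hle hfg
      exact ⟨K, le_bot_iff.mp hK⟩
    obtain ⟨K, hNK⟩ := hNnil
    have hecoeff : ∀ s, e.coeff s ∈ N := by
      intro s
      rw [he0, finset_sum_coeff]
      refine Submodule.sum_mem _ fun i hi => ?_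
      rw [coeff_C_mul, coeff_X_pow]
      by_cases hqs : s = q ^ i
      · rw [if_pos hqs, mul_one]
        refine Ideal.subset_span ⟨i, ?_, rfl⟩
        rw [Finset.mem_Ico] at hi
        exact ⟨by omega, by omega⟩
      · rw [if_neg hqs, mul_zero]
        exact Submodule.zero_mem _
    refine ⟨fun i => X ^ (i : ℕ), fun g => ?_⟩
    obtain ⟨c, hcrep⟩ := aux_exists hd hm' hdeg u hNK hecoeff hfe g
    refine ⟨c, hcrep, ?_⟩
    intro c' hc'
    have hdiff : ∑ i, aeval f ((c' - c) i) * X ^ (i : ℕ) = 0 := by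
      have : ∑ i : Fin d, aeval f ((c' - c) i) * X ^ (i : ℕ)
          = (∑ i : Fin d, aeval f (c' i) * X ^ (i : ℕ))
            - ∑ i : Fin d, aeval f (c i) * X ^ (i : ℕ) := by
        rw [← Finset.sum_sub_distrib]
        refine Finset.sum_congr rfl fun i _ => ?_
        simp [map_sub, sub_mul]
      rw [this, ← hc', ← hcrep, sub_self]
    have h0 := aux_unique hd hm' hdeg u hNK hecoeff hfe (c' - c) hdiff
    exact sub_eq_zero.mp h0
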